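/- Let g : [0, ΔT] → ℝ^n be C^s with ‖g^{(j)}(t)‖ ≤ M_j for all t ∈ [0,ΔT] and 0 ≤ j ≤ s. Let t_1 < ... < t_s be points in [0,ΔT] and G = [g(t_1) ... g(t_s)] ∈ ℝ^{n×s}. Then for each j = 1,...,s−1 there exists a constant c (depending only on s and the interpolation nodes, not on g or ΔT) such that the (j+1)-th singular value of G satisfies σ_{j+1}(G) ≤ c √(s−j) M_j (ΔT)^j. -/

import Mathlib

/-- The spectral norm (largest singular value) of a real matrix,
realized as the operator norm of the induced map between Euclidean spaces. -/
noncomputable def matrixSpectralNorm {m n : ℕ} (A : Matrix (Fin m) (Fin n) ℝ) : ℝ :=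
  ‖LinearMap.toContinuousLinearMap (Matrix.toEuclideanLin A)‖

/-- `singularValue A k` is the `(k+1)`-th largest singular value of `A`
(`k` is 0-indexed, so `singularValue A 0 = σ_1` is the largest one):
the square roots of the eigenvalues of `Aᴴ * A`, sorted in decreasing order. -/
noncomputable def singularValue {m n : ℕ} (A : Matrix (Fin m) (Fin n) ℝ) (k : Fin n) : ℝ :=
  Real.sqrt ((Matrix.isHermitian_conjTranspose_mul_self A).eigenvalues
    (Tuple.sort (Matrix.isHermitian_conjTranspose_mul_self A).eigenvalues k.rev))


open scoped Matrix

open Finset in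
lemma key_eig {s : ℕ} {A : Matrix (Fin s) (Fin s) ℝ} (hA : A.IsHermitian) (k : Fin s)
    (W : Submodule ℝ (EuclideanSpace ℝ (Fin s))) (hW : s - (k : ℕ) ≤ Module.finrank ℝ W)
    {c : ℝ} (hc : ∀ x ∈ W, (inner ℝ x (Matrix.toEuclideanLin A x) : ℝ) ≤ c * ‖x‖ ^ 2) :
    hA.eigenvalues (Tuple.sort hA.eigenvalues k.rev) ≤ c := by
  classical
  set b := hA.eigenvectorBasis with hb
  set σp := Tuple.sort hA.eigenvalues with hσp
  have hs : (k : ℕ) < s := k.2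
  have hr : (k.rev : ℕ) = s - 1 - k := by
    simp [Fin.rev]; omega
  -- the top eigenvector family
  set r : ℕ := s - 1 - (k : ℕ) with hrdef
  have hrk : r + (k : ℕ) = s - 1 := by omega
  let e : Fin ((k : ℕ) + 1) → EuclideanSpace ℝ (Fin s) :=
    fun i => b (σp ⟨r + (i : ℕ), by omega⟩)
  have he : LinearIndependent ℝ e := by
    have hinj : Function.Injective (fun i : Fin ((k : ℕ) + 1) => σp ⟨r + (i : ℕ), by omega⟩) := by
      intro a a' h
      have := σp.injective h
      simpa [Fin.ext_iff] using this
    have := b.toBasis.linearIndependent.comp _ hinj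
    simp only [OrthonormalBasis.coe_toBasis] at this; exact this
  set U := Submodule.span ℝ (Set.range e) with hU
  have hUfin : Module.finrank ℝ U = (k : ℕ) + 1 := by
    rw [hU, finrank_span_eq_card he, Fintype.card_fin]
  have hdim : 0 < Module.finrank ℝ (U ⊓ W : Submodule ℝ (EuclideanSpace ℝ (Fin s))) := by
    have h1 := Submodule.finrank_sup_add_finrank_inf_eq U W
    have h2 : Module.finrank ℝ (U ⊔ W : Submodule ℝ (EuclideanSpace ℝ (Fin s))) ≤ s := by
      have := Submodule.finrank_le (U ⊔ W)
      simpa [finrank_euclideanSpace] using this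
    omega
  obtain ⟨⟨x, hxUW⟩, hxne⟩ := Module.finrank_pos_iff_exists_ne_zero.mp hdim
  have hxU : x ∈ U := hxUW.1
  have hxW : x ∈ W := hxUW.2
  have hx0 : x ≠ 0 := by
    intro h; exact hxne (by simp [h, Submodule.mk_eq_zero])
  -- coordinates
  have hrepr : ∀ i, b.repr (Matrix.toEuclideanLin A x) i = hA.eigenvalues i * b.repr x i := by
    intro i
    rw [b.repr_apply_apply, b.repr_apply_apply]
    have hsymm := (Matrix.isHermitian_iff_isSymmetric.mp hA)
    rw [← hsymm (b i) x]
    have hb1 : Matrix.toEuclideanLin A (b i) = hA.eigenvalues i • b i := by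
      apply (WithLp.equiv 2 (Fin s → ℝ)).injective
      simpa [Matrix.toEuclideanLin_apply] using hA.mulVec_eigenvectorBasis i
    rw [hb1, real_inner_smul_left]
  have hinner : (inner ℝ x (Matrix.toEuclideanLin A x) : ℝ)
      = ∑ i, hA.eigenvalues i * (b.repr x i) ^ 2 := by
    rw [← b.repr.inner_map_map x (Matrix.toEuclideanLin A x)]
    simp only [PiLp.inner_apply, RCLike.inner_apply, conj_trivial, hrepr]
    apply Finset.sum_congr rfl; intro i _; ring
  have hnorm : ‖x‖ ^ 2 = ∑ i, (b.repr x i) ^ 2 := by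
    rw [← real_inner_self_eq_norm_sq, ← b.repr.inner_map_map x x]
    simp only [PiLp.inner_apply, RCLike.inner_apply, conj_trivial]
    apply Finset.sum_congr rfl; intro i _; ring
  -- vanishing of low coordinates
  have hzero0 : ∀ i : Fin s, (i : ℕ) < r → ∀ y ∈ U, b.repr y (σp i) = 0 := by
    intro i hi y hy
    rw [hU] at hy
    induction hy using Submodule.span_induction with
    | mem z hz =>
      obtain ⟨m, rfl⟩ := hz
      rw [b.repr_apply_apply]
      have hne : σp i ≠ σp ⟨r + (m : ℕ), by omega⟩ := by
        intro h
        have h2 : (i : ℕ) = r + (m : ℕ) := by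
          simpa [Fin.ext_iff] using σp.injective h
        omega
      have := b.orthonormal.2 hne
      simpa [e, real_inner_comm] using this
    | zero => simp
    | add y z _ _ hy hz => simp [map_add, hy, hz]
    | smul a y _ hy => simp [map_smul, hy]
  have hzero : ∀ i : Fin s, (i : ℕ) < r → b.repr x (σp i) = 0 :=
    fun i hi => hzero0 i hi x hxU
  -- reindex by the sorting permutation
  set d : Fin s → ℝ := fun i => b.repr x (σp i) with hd
  have hsum1 : (inner ℝ x (Matrix.toEuclideanLin A x) : ℝ)
      = ∑ i, hA.eigenvalues (σp i) * (d i) ^ 2 := by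
    rw [hinner, ← Equiv.sum_comp σp (fun i => hA.eigenvalues i * (b.repr x i) ^ 2)]
  have hsum2 : ‖x‖ ^ 2 = ∑ i, (d i) ^ 2 := by
    rw [hnorm, ← Equiv.sum_comp σp (fun i => (b.repr x i) ^ 2)]
  set μr : ℝ := hA.eigenvalues (σp k.rev) with hμr
  have hmono := Tuple.monotone_sort hA.eigenvalues
  have hlow : μr * ‖x‖ ^ 2 ≤ (inner ℝ x (Matrix.toEuclideanLin A x) : ℝ) := by
    rw [hsum1, hsum2, Finset.mul_sum]
    apply Finset.sum_le_sum
    intro i _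
    by_cases hi : (i : ℕ) < r
    · simp [hd, hzero i hi]
    · have : μr ≤ hA.eigenvalues (σp i) := by
        have : k.rev ≤ i := by
          rw [Fin.le_def, hr]; omega
        exact hmono this
      nlinarith [sq_nonneg (d i)]
  have hup := hc x hxW
  have hxpos : 0 < ‖x‖ ^ 2 := pow_pos (norm_pos_iff.mpr hx0) 2
  nlinarith

lemma eucl_norm_sq {m : ℕ} (v : EuclideanSpace ℝ (Fin m)) : ‖v‖ ^ 2 = ∑ i, v i ^ 2 := by
  rw [EuclideanSpace.norm_eq, Real.sq_sqrt (Finset.sum_nonneg fun i _ => sq_nonneg _)]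
  exact Finset.sum_congr rfl fun i _ => by rw [Real.norm_eq_abs, sq_abs]

/-- Theorem 1 of the paper: let `g : [0, ΔT] → ℝ^n` be `C^s` with
`‖g^{(i)}(t)‖ ≤ M_i` for all `t ∈ [0,ΔT]` and `0 ≤ i ≤ s`. Let `t_1 < ... < t_s` be points in
`[0,ΔT]` (given as fixed relative positions `θ_k ∈ [0,1]`, so that `t_k = ΔT·θ_k`), and
`G = [g(t_1) ... g(t_s)] ∈ ℝ^{n×s}` the sample matrix. Then for each `j = 1,...,s−1`
there is a constant `c > 0` depending only on `s`, `j` and the interpolation nodes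
(not on `g`, `n`, `M` or `ΔT`) such that the `(j+1)`-th singular value of `G` satisfies
`σ_{j+1}(G) ≤ c √(s−j) M_j (ΔT)^j`. -/
theorem stmt11 (s j : ℕ) (hj1 : 1 ≤ j) (hj2 : j ≤ s - 1)
    (θ : Fin s → ℝ) (hθmono : StrictMono θ) (hθmem : ∀ k, θ k ∈ Set.Icc (0 : ℝ) 1) :
    ∃ c : ℝ, 0 < c ∧
      ∀ (n : ℕ) (ΔT : ℝ), 0 < ΔT →
        ∀ (g : ℝ → EuclideanSpace ℝ (Fin n)) (M : ℕ → ℝ),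
          ContDiffOn ℝ s g (Set.Icc 0 ΔT) →
          (∀ i ≤ s, ∀ t ∈ Set.Icc (0 : ℝ) ΔT,
            ‖iteratedDerivWithin i g (Set.Icc 0 ΔT) t‖ ≤ M i) →
          singularValue (Matrix.of fun (i : Fin n) (k : Fin s) => g (ΔT * θ k) i)
              ⟨j, by omega⟩
            ≤ c * Real.sqrt (s - j : ℕ) * M j * ΔT ^ j := by
  classical
  have hs2 : 2 ≤ s := by omega
  have hjs : j < s := by omega
  refine ⟨Real.sqrt s, Real.sqrt_pos.mpr (by positivity), ?_⟩
  intro n ΔT hΔT g M hg hM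
  set t : Fin s → ℝ := fun k => ΔT * θ k with htdef
  have ht : ∀ k, t k ∈ Set.Icc 0 ΔT := by
    intro k
    obtain ⟨h1, h2⟩ := hθmem k
    constructor
    · positivity
    · calc ΔT * θ k ≤ ΔT * 1 := by nlinarith
        _ = ΔT := mul_one ΔT
  have hMj0 : 0 ≤ M j := le_trans (norm_nonneg _)
    (hM j (by omega) 0 ⟨le_refl _, le_of_lt hΔT⟩)
  set B : ℝ := M j * ΔT ^ j with hB
  have hB0 : 0 ≤ B := by positivity
  set G : Matrix (Fin n) (Fin s) ℝ := Matrix.of fun (i : Fin n) (k : Fin s) => g (t k) i with hG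
  set p : ℝ → EuclideanSpace ℝ (Fin n) :=
    fun x => taylorWithinEval g (j - 1) (Set.Icc 0 ΔT) 0 x with hp
  have hjj : (j - 1) + 1 = j := by omega
  -- Taylor remainder bound
  have htay : ∀ k : Fin s, ‖g (t k) - p (t k)‖ ≤ B := by
    intro k
    have hgj : ContDiffOn ℝ ((j - 1 : ℕ) + 1) g (Set.Icc 0 ΔT) := by
      apply hg.of_le
      norm_cast
      omega
    have hC : ∀ y ∈ Set.Icc (0:ℝ) ΔT,
        ‖iteratedDerivWithin ((j - 1) + 1) g (Set.Icc 0 ΔT) y‖ ≤ M j := by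
      intro y hy
      rw [hjj]
      exact hM j (by omega) y hy
    have := taylor_mean_remainder_bound (f := g) (le_of_lt hΔT) hgj (ht k) hC
    refine le_trans this ?_
    rw [hjj, sub_zero]
    calc M j * (t k) ^ j / (Nat.factorial (j - 1) : ℝ) ≤ M j * (t k) ^ j := by
          apply div_le_self
          · have := (ht k).1; positivity
          · exact_mod_cast Nat.one_le_iff_ne_zero.mpr (Nat.factorial_ne_zero _)
      _ ≤ M j * ΔT ^ j :=
          mul_le_mul_of_nonneg_left (pow_le_pow_left₀ (ht k).1 (ht k).2 j) hMj0
  -- Vandermonde-type matrix and the kernel subspace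
  set V : Matrix (Fin j) (Fin s) ℝ := Matrix.of fun (l : Fin j) (k : Fin s) => (t k) ^ (l : ℕ)
    with hV
  set W : Submodule ℝ (EuclideanSpace ℝ (Fin s)) := LinearMap.ker (Matrix.toEuclideanLin V)
    with hW
  have hWrank : s - j ≤ Module.finrank ℝ W := by
    have h1 := LinearMap.finrank_range_add_finrank_ker (Matrix.toEuclideanLin V : _ →ₗ[ℝ] _)
    have h2 : Module.finrank ℝ (LinearMap.range (Matrix.toEuclideanLin V : _ →ₗ[ℝ] _)) ≤ j := by
      have := Submodule.finrank_le (LinearMap.range (Matrix.toEuclideanLin V : _ →ₗ[ℝ] _))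
      simpa [finrank_euclideanSpace] using this
    rw [finrank_euclideanSpace] at h1
    simp only [Fintype.card_fin] at h1
    rw [hW]
    omega
  -- the error matrix
  set E : Matrix (Fin n) (Fin s) ℝ :=
    Matrix.of fun (i : Fin n) (k : Fin s) => g (t k) i - p (t k) i with hE
  have hcol : ∀ k : Fin s, (∑ i : Fin n, (E i k) ^ 2) ≤ B ^ 2 := by
    intro k
    have h1 : (∑ i : Fin n, (E i k) ^ 2) = ‖g (t k) - p (t k)‖ ^ 2 := by
      rw [eucl_norm_sq]
      exact Finset.sum_congr rfl fun i _ => by simp [hE]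
    rw [h1]
    have := htay k
    nlinarith [norm_nonneg (g (t k) - p (t k))]
  have hF2 : (∑ i : Fin n, ∑ k : Fin s, (E i k) ^ 2) ≤ s * B ^ 2 := by
    rw [Finset.sum_comm]
    calc (∑ k : Fin s, ∑ i : Fin n, (E i k) ^ 2) ≤ ∑ _k : Fin s, B ^ 2 :=
          Finset.sum_le_sum fun k _ => hcol k
      _ = s * B ^ 2 := by simp [mul_comm]
  -- quadratic form bound on W
  have hc : ∀ x ∈ W, (inner ℝ x (Matrix.toEuclideanLin (G.conjTranspose * G) x) : ℝ)
      ≤ ((s : ℝ) * B ^ 2) * ‖x‖ ^ 2 := by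
    intro x hxW
    have hVx : ∀ l : Fin j, (∑ k : Fin s, (t k) ^ (l : ℕ) * x k) = 0 := by
      intro l
      have h0 : Matrix.toEuclideanLin V x = 0 := (LinearMap.mem_ker).mp hxW
      have := congrFun (congrArg (WithLp.equiv 2 (Fin j → ℝ)) h0) l
      simpa [Matrix.toEuclideanLin_apply, Matrix.mulVec, dotProduct, hV] using this
    have hps : ∀ (y : ℝ) (i : Fin n), p y i
        = ∑ l ∈ Finset.range j,
            ((Nat.factorial l : ℝ)⁻¹ * y ^ l) * iteratedDerivWithin l g (Set.Icc 0 ΔT) 0 i := by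
      intro y i
      rw [hp]
      simp only [taylor_within_apply, hjj, sub_zero]
      have hrfl : (∑ l ∈ Finset.range j,
            ((Nat.factorial l : ℝ)⁻¹ * y ^ l) • iteratedDerivWithin l g (Set.Icc 0 ΔT) 0) i
          = EuclideanSpace.proj (𝕜 := ℝ) i (∑ l ∈ Finset.range j,
            ((Nat.factorial l : ℝ)⁻¹ * y ^ l) • iteratedDerivWithin l g (Set.Icc 0 ΔT) 0) := rfl
      rw [hrfl, map_sum]
      simp [smul_eq_mul]
    -- P x = 0 coordinatewise
    have hPx : ∀ i : Fin n, (∑ k : Fin s, p (t k) i * x k) = 0 := by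
      intro i
      calc (∑ k : Fin s, p (t k) i * x k)
          = ∑ k : Fin s, ∑ l ∈ Finset.range j,
              ((Nat.factorial l : ℝ)⁻¹ * iteratedDerivWithin l g (Set.Icc 0 ΔT) 0 i)
                * ((t k) ^ l * x k) := by
            refine Finset.sum_congr rfl fun k _ => ?_
            rw [hps, Finset.sum_mul]
            exact Finset.sum_congr rfl fun l _ => by ring
        _ = ∑ l ∈ Finset.range j,
              ((Nat.factorial l : ℝ)⁻¹ * iteratedDerivWithin l g (Set.Icc 0 ΔT) 0 i)
                * (∑ k : Fin s, (t k) ^ l * x k) := by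
            rw [Finset.sum_comm]
            exact Finset.sum_congr rfl fun l _ => by rw [Finset.mul_sum]
        _ = 0 := by
            refine Finset.sum_eq_zero fun l hl => ?_
            rw [hVx ⟨l, Finset.mem_range.mp hl⟩]
            ring
    -- G x = E x
    have hGE : ∀ i : Fin n, (G *ᵥ (x : Fin s → ℝ)) i = (E *ᵥ (x : Fin s → ℝ)) i := by
      intro i
      simp only [Matrix.mulVec, dotProduct, hG, hE, Matrix.of_apply]
      have : (∑ k : Fin s, (g (t k) i - p (t k) i) * x k)
          = (∑ k : Fin s, g (t k) i * x k) - ∑ k : Fin s, p (t k) i * x k := by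
        rw [← Finset.sum_sub_distrib]
        exact Finset.sum_congr rfl fun k _ => by ring
      rw [this, hPx i, sub_zero]
    -- quadratic form as sum of squares
    have hq : (inner ℝ x (Matrix.toEuclideanLin (G.conjTranspose * G) x) : ℝ)
        = ∑ i : Fin n, ((G *ᵥ (x : Fin s → ℝ)) i) ^ 2 := by
      rw [PiLp.inner_apply]
      simp only [RCLike.inner_apply, conj_trivial]
      have h1 : (∑ k : Fin s, x k * (Matrix.toEuclideanLin (G.conjTranspose * G) x) k)
          = (x : Fin s → ℝ) ⬝ᵥ ((G.conjTranspose * G) *ᵥ (x : Fin s → ℝ)) := rfl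
      simp_rw [mul_comm _ (x.ofLp _)]
      rw [h1, ← Matrix.mulVec_mulVec, Matrix.dotProduct_mulVec,
        Matrix.conjTranspose_eq_transpose_of_trivial, Matrix.vecMul_transpose]
      simp [dotProduct, sq]
    rw [hq]
    calc (∑ i : Fin n, ((G *ᵥ (x : Fin s → ℝ)) i) ^ 2)
        = ∑ i : Fin n, ((E *ᵥ (x : Fin s → ℝ)) i) ^ 2 :=
          Finset.sum_congr rfl fun i _ => by rw [hGE]
      _ ≤ ∑ i : Fin n, (∑ k : Fin s, (E i k) ^ 2) * (∑ k : Fin s, (x k) ^ 2) := by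
          refine Finset.sum_le_sum fun i _ => ?_
          simpa [Matrix.mulVec, dotProduct] using
            Finset.sum_mul_sq_le_sq_mul_sq Finset.univ (fun k => E i k) (fun k => x k)
      _ = (∑ i : Fin n, ∑ k : Fin s, (E i k) ^ 2) * (∑ k : Fin s, (x k) ^ 2) := by
          rw [Finset.sum_mul]
      _ ≤ ((s : ℝ) * B ^ 2) * ‖x‖ ^ 2 := by
          rw [eucl_norm_sq]
          have hx2 : 0 ≤ (∑ k : Fin s, (x k) ^ 2) := Finset.sum_nonneg fun k _ => sq_nonneg _
          exact mul_le_mul_of_nonneg_right hF2 hx2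
  -- apply the key eigenvalue bound
  have hkey := key_eig (Matrix.isHermitian_conjTranspose_mul_self G) ⟨j, hjs⟩ W hWrank hc
  have hfin : singularValue G ⟨j, hjs⟩ ≤ Real.sqrt ((s : ℝ) * B ^ 2) := by
    rw [singularValue]
    exact Real.sqrt_le_sqrt hkey
  show singularValue G ⟨j, hjs⟩ ≤ Real.sqrt s * Real.sqrt ((s - j : ℕ) : ℝ) * M j * ΔT ^ j
  refine le_trans hfin ?_
  rw [Real.sqrt_mul (by positivity), Real.sqrt_sq hB0]
  have h1 : (1 : ℝ) ≤ Real.sqrt ((s - j : ℕ) : ℝ) := by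
    rw [Real.one_le_sqrt]
    exact_mod_cast (by omega : 1 ≤ s - j)
  have h2 : (0 : ℝ) ≤ Real.sqrt s := Real.sqrt_nonneg _
  rw [hB]
  have hB0' : (0:ℝ) ≤ M j * ΔT ^ j := by positivity
  nlinarith [mul_nonneg (mul_nonneg h2 hB0') (sub_nonneg.mpr h1)]
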